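/- Let W ⊆ C^ω be any objective and M a chromatic memory structure. If M suffices to play optimally for W in all finitely branching one-player arenas of Player 1, then W is M-progress-consistent. -/

import Mathlib

set_option autoImplicit false

namespace RegularMemory

/-- Concatenation of a finite word with an infinite word. -/
def wcat {C : Type} (w : List C) (x : ℕ → C) : ℕ → C := fun n =>
  if h : n < w.length then w.get ⟨n, h⟩ else x (n - w.length)

/-- The infinite word `w^ω` (junk value if `w` is empty). -/
noncomputable def wpow {C : Type} [Nonempty C] : List C → ℕ → C
  | [] => fun _ => Classical.arbitrary C
  | (a :: l) => fun n => (a :: l).get ⟨n % (a :: l).length, Nat.mod_lt n (Nat.succ_pos _)⟩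

/-- Winning continuations `w⁻¹W` of the finite word `w` for the objective `W`. -/
def contAfter {C : Type} (W : Set (ℕ → C)) (w : List C) : Set (ℕ → C) :=
  {x | wcat w x ∈ W}

/-- Prefix preorder `w₁ ⪯_W w₂`. -/
def prefLe {C : Type} (W : Set (ℕ → C)) (w₁ w₂ : List C) : Prop :=
  contAfter W w₁ ⊆ contAfter W w₂

/-- Strict prefix relation `w₁ ≺_W w₂`. -/
def prefLt {C : Type} (W : Set (ℕ → C)) (w₁ w₂ : List C) : Prop :=
  prefLe W w₁ w₂ ∧ ¬ prefLe W w₂ w₁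

/-- Comparability for the prefix preorder. -/
def PrefComparable {C : Type} (W : Set (ℕ → C)) (w₁ w₂ : List C) : Prop :=
  prefLe W w₁ w₂ ∨ prefLe W w₂ w₁

/-- The general reachability objective derived from `A`: infinite words with a prefix in `A`. -/
def ReachObj {C : Type} (A : Set (List C)) : Set (ℕ → C) :=
  {x | ∃ n : ℕ, (List.ofFn fun i : Fin n => x i) ∈ A}

/-- The general safety objective derived from `A`. -/
def SafeObj {C : Type} (A : Set (List C)) : Set (ℕ → C) :=
  (ReachObj A)ᶜ

/-- The prefix preorder of `W` has finitely many equivalence classes. -/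
def FinClasses {C : Type} (W : Set (ℕ → C)) : Prop :=
  (Set.range fun w : List C => contAfter W w).Finite

/-- The prefix preorder of `W` is well-founded:
every nonempty chain contains a minimal element. -/
def PrefWellFounded {C : Type} (W : Set (ℕ → C)) : Prop :=
  ∀ S : Set (List C), S.Nonempty →
    (∀ w₁ ∈ S, ∀ w₂ ∈ S, PrefComparable W w₁ w₂) →
    ∃ w₀ ∈ S, ∀ w ∈ S, ¬ prefLt W w w₀

/-- Chromatic memory structure. -/
structure MemStruct (C : Type) where
  M : Type
  init : M
  upd : M → C → M

/-- Extension of the update function to finite words. -/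
def MemStruct.updStar {C : Type} (N : MemStruct C) (m : N.M) (w : List C) : N.M :=
  w.foldl N.upd m

/-- The trivial one-state memory structure. -/
def trivMem (C : Type) : MemStruct C :=
  ⟨Unit, (), fun _ _ => ()⟩

/-- `W` is `N`-strongly-monotone. -/
def StronglyMonotone {C : Type} (N : MemStruct C) (W : Set (ℕ → C)) : Prop :=
  ∀ w₁ w₂ : List C,
    N.updStar N.init w₁ = N.updStar N.init w₂ → PrefComparable W w₁ w₂

/-- `W` is `N`-progress-consistent. -/
def ProgressConsistent {C : Type} [Nonempty C] (N : MemStruct C) (W : Set (ℕ → C)) : Prop :=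
  ∀ (m : N.M) (w₁ w₂ : List C),
    N.updStar N.init w₁ = m → N.updStar m w₂ = m →
    prefLt W w₁ (w₁ ++ w₂) → wcat w₁ (wpow w₂) ∈ W

/-- Two-player arena with colored edges; Player-1 vertices have outgoing edges
(so that strategies of Player 1 exist). -/
structure Arena (C : Type) where
  V : Type
  P1 : V → Prop
  E : Set (V × C × V)
  succ : ∀ v : V, P1 v → ∃ e ∈ E, e.1 = v

namespace Arena

/-- Valid histories starting at a given vertex. -/
def HistFrom {C : Type} (A : Arena C) : A.V → List (A.V × C × A.V) → Prop
  | _, [] => True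
  | v, e :: l => e ∈ A.E ∧ e.1 = v ∧ HistFrom A e.2.2 l

/-- Endpoint of a history. -/
def endFrom {C : Type} (A : Arena C) : A.V → List (A.V × C × A.V) → A.V
  | v, [] => v
  | _, e :: l => endFrom A e.2.2 l

/-- Infinite plays from a vertex. -/
def PlayFrom {C : Type} (A : Arena C) (v : A.V) (π : ℕ → A.V × C × A.V) : Prop :=
  (π 0).1 = v ∧ ∀ n : ℕ, π n ∈ A.E ∧ (π n).2.2 = (π (n + 1)).1

/-- Colors along a play. -/
def playCol {C V : Type} (π : ℕ → V × C × V) : ℕ → C :=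
  fun n => (π n).2.1

/-- Strategies of Player 1: on every valid history ending in a Player-1 vertex,
the strategy picks an edge leaving that vertex. -/
structure Strategy {C : Type} (A : Arena C) where
  next : A.V → List (A.V × C × A.V) → A.V × C × A.V
  legal : ∀ (v : A.V) (l : List (A.V × C × A.V)),
    A.HistFrom v l → A.P1 (A.endFrom v l) →
      next v l ∈ A.E ∧ (next v l).1 = A.endFrom v l

/-- A play from `v` is consistent with the strategy `σ`. -/
def Strategy.Consistent {C : Type} {A : Arena C} (σ : A.Strategy) (v : A.V)
    (π : ℕ → A.V × C × A.V) : Prop :=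
  ∀ n : ℕ, A.P1 (A.endFrom v (List.ofFn fun i : Fin n => π i)) →
    π n = σ.next v (List.ofFn fun i : Fin n => π i)

/-- `σ` is winning from `v` for the objective `W`. -/
def Strategy.WinningFrom {C : Type} {A : Arena C} (σ : A.Strategy)
    (W : Set (ℕ → C)) (v : A.V) : Prop :=
  ∀ π : ℕ → A.V × C × A.V, A.PlayFrom v π → σ.Consistent v π → playCol π ∈ W

/-- `σ` is optimal in `(A, W)`: winning from every vertex from which
Player 1 has some winning strategy. -/
def Strategy.Optimal {C : Type} {A : Arena C} (σ : A.Strategy) (W : Set (ℕ → C)) : Prop :=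
  ∀ v : A.V, (∃ σ' : A.Strategy, σ'.WinningFrom W v) → σ.WinningFrom W v

/-- `σ` is based on the memory structure `N`. -/
def Strategy.BasedOn {C : Type} {A : Arena C} (σ : A.Strategy) (N : MemStruct C) : Prop :=
  ∃ nxt : A.V → N.M → A.V × C × A.V,
    ∀ (v : A.V) (l : List (A.V × C × A.V)),
      A.HistFrom v l → A.P1 (A.endFrom v l) →
        σ.next v l = nxt (A.endFrom v l) (N.updStar N.init (l.map fun e => e.2.1))

/-- Finite arena: finitely many vertices and edges. -/
def IsFinite {C : Type} (A : Arena C) : Prop := Finite A.V ∧ A.E.Finite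

/-- Finitely branching arena. -/
def FinBranching {C : Type} (A : Arena C) : Prop :=
  ∀ v : A.V, {e ∈ A.E | e.1 = v}.Finite

/-- One-player arena of Player 1. -/
def OneP1 {C : Type} (A : Arena C) : Prop := ∀ v : A.V, A.P1 v

end Arena

/-- `N` suffices to play optimally for `W` in all arenas of the class `P`. -/
def SufficesIn {C : Type} (N : MemStruct C) (W : Set (ℕ → C))
    (P : Arena C → Prop) : Prop :=
  ∀ A : Arena C, P A → ∃ σ : A.Strategy, σ.BasedOn N ∧ σ.Optimal W

/-- Deterministic automaton (with complete transition function). -/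
structure DetAuto (C : Type) where
  Q : Type
  init : Q
  δ : Q → C → Q
  F : Set Q

/-- Extension of the transition function to finite words. -/
def DetAuto.δStar {C : Type} (D : DetAuto C) (q : D.Q) (w : List C) : D.Q :=
  w.foldl D.δ q

/-- Language recognized by `D`. -/
def DetAuto.lang {C : Type} (D : DetAuto C) : Set (List C) :=
  {w | D.δStar D.init w ∈ D.F}

/-- Prefix preorder extended to automaton states. -/
def statePrefLe {C : Type} (D : DetAuto C) (W : Set (ℕ → C)) (q₁ q₂ : D.Q) : Prop :=
  ∀ w₁ w₂ : List C,
    D.δStar D.init w₁ = q₁ → D.δStar D.init w₂ = q₂ → prefLe W w₁ w₂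

def statePrefLt {C : Type} (D : DetAuto C) (W : Set (ℕ → C)) (q₁ q₂ : D.Q) : Prop :=
  statePrefLe D W q₁ q₂ ∧ ¬ statePrefLe D W q₂ q₁

def StateComparable {C : Type} (D : DetAuto C) (W : Set (ℕ → C)) (q₁ q₂ : D.Q) : Prop :=
  statePrefLe D W q₁ q₂ ∨ statePrefLe D W q₂ q₁

/-- Monotone decomposition of `D` with `k` sets. -/
def MonotoneDecomposition {C : Type} (D : DetAuto C) (W : Set (ℕ → C))
    {k : ℕ} (Γ : Fin k → Set D.Q) : Prop :=
  (∀ q : D.Q, ∃ i : Fin k, q ∈ Γ i) ∧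
  (∀ (c : C) (i : Fin k), ∃ j : Fin k, (fun q => D.δ q c) '' Γ i ⊆ Γ j) ∧
  (∀ i : Fin k, ∀ q₁ ∈ Γ i, ∀ q₂ ∈ Γ i, StateComparable D W q₁ q₂)

end RegularMemory


namespace RegularMemory

section AuxGeneric

variable {C : Type}

theorem endFrom_concat (A : Arena C) (e : A.V × C × A.V) :
    ∀ (l : List (A.V × C × A.V)) (v : A.V), A.endFrom v (l ++ [e]) = e.2.2
  | [], _ => rfl
  | f :: l, _ => endFrom_concat A e l f.2.2

theorem histFrom_concat (A : Arena C) {e : A.V × C × A.V} (he : e ∈ A.E) :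
    ∀ {l : List (A.V × C × A.V)} {v : A.V}, A.HistFrom v l → e.1 = A.endFrom v l →
      A.HistFrom v (l ++ [e])
  | [], _, _, hsrc => ⟨he, hsrc, trivial⟩
  | f :: l, _, hl, hsrc => ⟨hl.1, hl.2.1, histFrom_concat A he hl.2.2 hsrc⟩

variable {A : Arena C}

def mkHist (σ : A.Strategy) (v : A.V) : ℕ → List (A.V × C × A.V)
  | 0 => []
  | n + 1 => mkHist σ v n ++ [σ.next v (mkHist σ v n)]

def mkPlay (σ : A.Strategy) (v : A.V) (n : ℕ) : A.V × C × A.V :=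
  σ.next v (mkHist σ v n)

theorem ofFn_mkPlay (σ : A.Strategy) (v : A.V) :
    ∀ n : ℕ, (List.ofFn fun i : Fin n => mkPlay σ v ↑i) = mkHist σ v n
  | 0 => rfl
  | n + 1 => by
    rw [List.ofFn_succ']
    simp only [Fin.coe_castSucc, Fin.val_last, List.concat_eq_append]
    rw [ofFn_mkPlay σ v n]
    rfl

theorem mkHist_valid (σ : A.Strategy) (v : A.V) (hP : ∀ u, A.P1 u) :
    ∀ n, A.HistFrom v (mkHist σ v n)
  | 0 => trivial
  | n + 1 =>
    histFrom_concat A (σ.legal v (mkHist σ v n) (mkHist_valid σ v hP n) (hP _)).1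
      (mkHist_valid σ v hP n) (σ.legal v (mkHist σ v n) (mkHist_valid σ v hP n) (hP _)).2

theorem mkPlay_mem (σ : A.Strategy) (v : A.V) (hP : ∀ u, A.P1 u) (n : ℕ) :
    mkPlay σ v n ∈ A.E :=
  (σ.legal v (mkHist σ v n) (mkHist_valid σ v hP n) (hP _)).1

theorem mkPlay_src (σ : A.Strategy) (v : A.V) (hP : ∀ u, A.P1 u) (n : ℕ) :
    (mkPlay σ v n).1 = A.endFrom v (mkHist σ v n) :=
  (σ.legal v (mkHist σ v n) (mkHist_valid σ v hP n) (hP _)).2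

theorem endFrom_mkHist (σ : A.Strategy) (v : A.V) (n : ℕ) :
    A.endFrom v (mkHist σ v (n + 1)) = (mkPlay σ v n).2.2 :=
  endFrom_concat A _ _ _

theorem mkPlay_playFrom (σ : A.Strategy) (v : A.V) (hP : ∀ u, A.P1 u) :
    A.PlayFrom v (mkPlay σ v) :=
  ⟨mkPlay_src σ v hP 0, fun n =>
    ⟨mkPlay_mem σ v hP n, ((mkPlay_src σ v hP (n + 1)).trans (endFrom_mkHist σ v n)).symm⟩⟩

theorem mkPlay_consistent (σ : A.Strategy) (v : A.V) :
    σ.Consistent v (mkPlay σ v) := fun n _ => by rw [ofFn_mkPlay]; rfl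

end AuxGeneric

section AuxWords

variable {C : Type}

theorem wcat_lt {w : List C} {x : ℕ → C} {n : ℕ} (h : n < w.length) :
    wcat w x n = w.get ⟨n, h⟩ := dif_pos h

theorem wcat_ge {w : List C} {x : ℕ → C} {n : ℕ} (h : w.length ≤ n) :
    wcat w x n = x (n - w.length) := dif_neg (by omega)

theorem wpow_eq [Nonempty C] {w : List C} (hw : w ≠ []) (n : ℕ) :
    wpow w n = w.get ⟨n % w.length, Nat.mod_lt n (List.length_pos_iff.mpr hw)⟩ := by
  cases w with
  | nil => exact absurd rfl hw
  | cons a l => rfl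

theorem ofFn_eq_of_get {w : List C} {n : ℕ} (hn : n = w.length) {f : Fin n → C}
    (h : ∀ (i : ℕ) (hi : i < n), f ⟨i, hi⟩ = w.get ⟨i, hn ▸ hi⟩) : List.ofFn f = w := by
  apply List.ext_get (by simpa using hn)
  intro i h₁ h₂
  rw [List.get_ofFn]
  exact h i (by simpa using h₁)

theorem ofFn_wcat (w : List C) (x : ℕ → C) :
    (List.ofFn fun i : Fin w.length => wcat w x ↑i) = w :=
  ofFn_eq_of_get rfl fun i hi => wcat_lt hi

theorem ofFn_wcat_append (w₁ w₂ : List C) (x : ℕ → C) :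
    (List.ofFn fun i : Fin w₁.length => wcat (w₁ ++ w₂) x ↑i) = w₁ := by
  apply ofFn_eq_of_get rfl
  intro i hi
  rw [wcat_lt (by simp; omega)]
  simp only [List.get_eq_getElem]
  exact List.getElem_append_left hi

theorem updStar_append {N : MemStruct C} (m : N.M) (p q : List C) :
    N.updStar m (p ++ q) = N.updStar (N.updStar m p) q :=
  List.foldl_append ..

theorem updStar_pow [Nonempty C] (N : MemStruct C) (m : N.M) (w₁ w₂ : List C)
    (hw₂ : w₂ ≠ []) (hm1 : N.updStar N.init w₁ = m) (hm2 : N.updStar m w₂ = m) :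
    ∀ k : ℕ, N.updStar N.init
      (List.ofFn fun i : Fin (w₁.length + w₂.length * k) => wcat w₁ (wpow w₂) ↑i) = m
  | 0 => by
    simp only [Nat.mul_zero, Nat.add_zero]
    rw [ofFn_wcat]
    exact hm1
  | k + 1 => by
    have hsplit : w₁.length + w₂.length * (k + 1)
        = (w₁.length + w₂.length * k) + w₂.length := by ring
    rw [hsplit, List.ofFn_add, updStar_append]
    have h1 : (List.ofFn fun i : Fin (w₁.length + w₂.length * k) =>
        wcat w₁ (wpow w₂) ↑(Fin.castAdd w₂.length i))
        = List.ofFn fun i : Fin (w₁.length + w₂.length * k) => wcat w₁ (wpow w₂) ↑i := by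
      simp [Fin.coe_castAdd]
    simp only [Fin.val_castLE]
    rw [updStar_pow N m w₁ w₂ hw₂ hm1 hm2 k]
    have h2 : (List.ofFn fun i : Fin w₂.length =>
        wcat w₁ (wpow w₂) ↑(Fin.natAdd (w₁.length + w₂.length * k) i)) = w₂ := by
      apply ofFn_eq_of_get rfl
      intro i hi
      have hidx : (w₁.length + w₂.length * k) + i = w₁.length + (w₂.length * k + i) := by omega
      simp only [Fin.coe_natAdd]
      rw [hidx, wcat_ge (by omega)]
      have : w₁.length + (w₂.length * k + i) - w₁.length = w₂.length * k + i := by omega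
      rw [this, wpow_eq hw₂]
      congr 1
      exact Fin.ext (by simp [Nat.mul_add_mod, Nat.mod_eq_of_lt hi])
    rw [h2, hm2]

end AuxWords

section AuxGadget

variable {C : Type}

def stepE (w₁ w₂ : List C) (x : ℕ → C) (u : ℕ) : ℕ × C × ℕ :=
  if u < w₁.length + w₂.length then
    (u, wcat (w₁ ++ w₂) x u, if u + 1 = w₁.length + w₂.length then w₁.length else u + 1)
  else (u, x (u - (w₁.length + w₂.length) + 1), u + 1)

def exitE (w₁ w₂ : List C) (x : ℕ → C) : ℕ × C × ℕ :=
  (w₁.length, x 0, w₁.length + w₂.length)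

theorem stepE_src (w₁ w₂ : List C) (x : ℕ → C) (u : ℕ) : (stepE w₁ w₂ x u).1 = u := by
  unfold stepE; split <;> rfl

@[reducible] def gadget (w₁ w₂ : List C) (x : ℕ → C) : Arena C where
  V := ℕ
  P1 := fun _ => True
  E := Set.range (stepE w₁ w₂ x) ∪ {exitE w₁ w₂ x}
  succ := fun v _ => ⟨stepE w₁ w₂ x v, Or.inl ⟨v, rfl⟩, stepE_src w₁ w₂ x v⟩

theorem gadget_E_cases {w₁ w₂ : List C} {x : ℕ → C} {e : ℕ × C × ℕ}
    (he : e ∈ (gadget w₁ w₂ x).E) : e = stepE w₁ w₂ x e.1 ∨ e = exitE w₁ w₂ x := by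
  rcases he with ⟨u, hu⟩ | he
  · left; rw [← hu, stepE_src]
  · right; exact he

theorem gadget_forced {w₁ w₂ : List C} {x : ℕ → C} {e : ℕ × C × ℕ}
    (he : e ∈ (gadget w₁ w₂ x).E) (hne : e.1 ≠ w₁.length) : e = stepE w₁ w₂ x e.1 := by
  rcases gadget_E_cases he with h | h
  · exact h
  · exact absurd (by rw [h]; rfl) hne

theorem gadget_finBranching (w₁ w₂ : List C) (x : ℕ → C) :
    (gadget w₁ w₂ x).FinBranching := by
  intro v
  apply Set.Finite.subset ((Set.finite_singleton (exitE w₁ w₂ x)).insert (stepE w₁ w₂ x v))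
  rintro e ⟨he, hsrc⟩
  rcases gadget_E_cases he with h | h
  · rw [← hsrc]
    exact Set.mem_insert_iff.mpr (Or.inl h)
  · exact Set.mem_insert_iff.mpr (Or.inr h)

end AuxGadget

section AuxPlays

variable {C : Type}

def trajA (n₁ n₂ n : ℕ) : ℕ := if n < n₁ then n else n₁ + (n - n₁) % n₂

def playA (w₁ w₂ : List C) (x : ℕ → C) (n : ℕ) : ℕ × C × ℕ :=
  stepE w₁ w₂ x (trajA w₁.length w₂.length n)

def playX (w₁ w₂ : List C) (x : ℕ → C) (s n : ℕ) : ℕ × C × ℕ :=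
  if n < s then stepE w₁ w₂ x n
  else if n = s then exitE w₁ w₂ x
  else stepE w₁ w₂ x (w₁.length + w₂.length + (n - s - 1))

theorem trajA_zero (n₁ n₂ : ℕ) : trajA n₁ n₂ 0 = 0 := by
  unfold trajA
  split
  · rfl
  · have h1 : n₁ = 0 := by omega
    simp [h1]

theorem trajA_lt {n₁ n₂ : ℕ} (hn₂ : 0 < n₂) (n : ℕ) : trajA n₁ n₂ n < n₁ + n₂ := by
  unfold trajA
  split
  · omega
  · have := Nat.mod_lt (n - n₁) hn₂
    omega

theorem trajA_succ {n₁ n₂ : ℕ} (hn₂ : 0 < n₂) (n : ℕ) :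
    trajA n₁ n₂ (n + 1) =
      if trajA n₁ n₂ n + 1 = n₁ + n₂ then n₁ else trajA n₁ n₂ n + 1 := by
  unfold trajA
  by_cases h1 : n + 1 < n₁
  · rw [if_pos h1, if_pos (show n < n₁ by omega),
      if_neg (show ¬(n + 1 = n₁ + n₂) by omega)]
  · rw [if_neg h1]
    by_cases h2 : n < n₁
    · rw [if_pos h2, if_neg (show ¬(n + 1 = n₁ + n₂) by omega)]
      have h3 : n + 1 - n₁ = 0 := by omega
      rw [h3, Nat.zero_mod]
      omega
    · rw [if_neg h2]
      have hr : (n - n₁) % n₂ < n₂ := Nat.mod_lt _ hn₂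
      have hmod : (n + 1 - n₁) % n₂ = ((n - n₁) % n₂ + 1) % n₂ := by
        rw [show n + 1 - n₁ = (n - n₁) + 1 from by omega, ← Nat.mod_add_mod]
      by_cases h3 : (n - n₁) % n₂ + 1 = n₂
      · rw [if_pos (show n₁ + (n - n₁) % n₂ + 1 = n₁ + n₂ by omega), hmod, h3, Nat.mod_self]
        omega
      · rw [if_neg (show ¬(n₁ + (n - n₁) % n₂ + 1 = n₁ + n₂) by omega), hmod,
          Nat.mod_eq_of_lt (by omega)]
        omega

theorem trajA_visit {n₁ n₂ n : ℕ} (hn₂ : 0 < n₂) (h : trajA n₁ n₂ n = n₁) :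
    ∃ k, n = n₁ + n₂ * k := by
  unfold trajA at h
  split at h
  · omega
  · refine ⟨(n - n₁) / n₂, ?_⟩
    have hmod : (n - n₁) % n₂ = 0 := by omega
    have := Nat.div_add_mod (n - n₁) n₂
    omega

theorem playA_src (w₁ w₂ : List C) (x : ℕ → C) (n : ℕ) :
    (playA w₁ w₂ x n).1 = trajA w₁.length w₂.length n := stepE_src ..

theorem playA_tgt {w₁ w₂ : List C} (x : ℕ → C) (hn₂ : 0 < w₂.length) (n : ℕ) :
    (playA w₁ w₂ x n).2.2 = trajA w₁.length w₂.length (n + 1) := by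
  rw [trajA_succ hn₂]
  unfold playA stepE
  rw [if_pos (trajA_lt hn₂ n)]

theorem playA_col {w₁ w₂ : List C} (x : ℕ → C) [Nonempty C] (hn₂ : 0 < w₂.length) (n : ℕ) :
    (playA w₁ w₂ x n).2.1 = wcat w₁ (wpow w₂) n := by
  have hw₂ : w₂ ≠ [] := by intro h; rw [h] at hn₂; simp at hn₂
  unfold playA stepE
  rw [if_pos (trajA_lt hn₂ n)]
  show wcat (w₁ ++ w₂) x (trajA w₁.length w₂.length n) = _
  unfold trajA
  by_cases h : n < w₁.length
  · rw [if_pos h, wcat_lt (by simp; omega), wcat_lt h]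
    simp only [List.get_eq_getElem]
    exact List.getElem_append_left h
  · rw [if_neg h]
    have hr : (n - w₁.length) % w₂.length < w₂.length := Nat.mod_lt _ hn₂
    rw [wcat_lt (by simp; omega), wcat_ge (by omega), wpow_eq hw₂]
    simp only [List.get_eq_getElem]
    rw [List.getElem_append_right (by omega)]
    simp only [show w₁.length + (n - w₁.length) % w₂.length - w₁.length
      = (n - w₁.length) % w₂.length from by omega]

theorem playA_mem (w₁ w₂ : List C) (x : ℕ → C) (n : ℕ) :
    playA w₁ w₂ x n ∈ (gadget w₁ w₂ x).E := Or.inl ⟨_, rfl⟩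

theorem playX_src {w₁ w₂ : List C} {x : ℕ → C} (s n : ℕ) :
    (playX w₁ w₂ x s n).1 =
      if n < s then n else if n = s then w₁.length
      else w₁.length + w₂.length + (n - s - 1) := by
  unfold playX
  split
  · exact stepE_src ..
  · split
    · rfl
    · exact stepE_src ..

theorem playX_tgt {w₁ w₂ : List C} {x : ℕ → C} {s : ℕ}
    (hs : s = w₁.length ∨ s = w₁.length + w₂.length) (hn₂ : 0 < w₂.length) (n : ℕ) :
    (playX w₁ w₂ x s n).2.2 = (playX w₁ w₂ x s (n + 1)).1 := by
  have hsle : s ≤ w₁.length + w₂.length := by rcases hs with h | h <;> omega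
  rw [playX_src]
  unfold playX
  by_cases h1 : n + 1 < s
  · rw [if_pos (show n < s by omega), if_pos h1]
    unfold stepE
    rw [if_pos (show n < w₁.length + w₂.length by omega)]
    show (if n + 1 = w₁.length + w₂.length then w₁.length else n + 1) = n + 1
    rw [if_neg (show ¬(n + 1 = w₁.length + w₂.length) by omega)]
  · by_cases h2 : n + 1 = s
    · rw [if_pos (show n < s by omega), if_neg h1, if_pos h2]
      unfold stepE
      rw [if_pos (show n < w₁.length + w₂.length by omega)]
      show (if n + 1 = w₁.length + w₂.length then w₁.length else n + 1) = w₁.length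
      rcases hs with h | h
      · rw [if_neg (show ¬(n + 1 = w₁.length + w₂.length) by omega)]
        omega
      · rw [if_pos (show n + 1 = w₁.length + w₂.length by omega)]
    · by_cases h3 : n = s
      · rw [if_neg (show ¬(n < s) by omega), if_pos h3, if_neg h1, if_neg h2]
        show w₁.length + w₂.length = w₁.length + w₂.length + (n + 1 - s - 1)
        omega
      · rw [if_neg (show ¬(n < s) by omega), if_neg h3, if_neg h1, if_neg h2]
        unfold stepE
        rw [if_neg (show ¬(w₁.length + w₂.length + (n - s - 1) < w₁.length + w₂.length) by omega)]
        show w₁.length + w₂.length + (n - s - 1) + 1 = w₁.length + w₂.length + (n + 1 - s - 1)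
        omega

end AuxPlays

section AuxTau

variable {C : Type}

theorem playX_col {w₁ w₂ : List C} {x : ℕ → C} {s : ℕ}
    (hsle : s ≤ w₁.length + w₂.length) (n : ℕ) :
    (playX w₁ w₂ x s n).2.1 = if n < s then wcat (w₁ ++ w₂) x n else x (n - s) := by
  unfold playX
  by_cases h1 : n < s
  · rw [if_pos h1, if_pos h1]
    unfold stepE
    rw [if_pos (show n < w₁.length + w₂.length by omega)]
  · rw [if_neg h1, if_neg h1]
    by_cases h2 : n = s
    · rw [if_pos h2]
      show x 0 = x (n - s)
      rw [show n - s = 0 from by omega]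
    · rw [if_neg h2]
      unfold stepE
      rw [if_neg (show ¬(w₁.length + w₂.length + (n - s - 1) < w₁.length + w₂.length) by omega)]
      show x (w₁.length + w₂.length + (n - s - 1) - (w₁.length + w₂.length) + 1) = x (n - s)
      congr 1
      omega

def tauNext (w₁ w₂ : List C) (x : ℕ → C) : ℕ → List (ℕ × C × ℕ) → ℕ × C × ℕ := fun v l =>
  if (gadget w₁ w₂ x).endFrom v l = w₁.length then
    (if l.length = w₁.length then stepE w₁ w₂ x w₁.length else exitE w₁ w₂ x)
  else stepE w₁ w₂ x ((gadget w₁ w₂ x).endFrom v l)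

def tauStrat (w₁ w₂ : List C) (x : ℕ → C) : (gadget w₁ w₂ x).Strategy where
  next := tauNext w₁ w₂ x
  legal := by
    intro v l _ _
    unfold tauNext
    split_ifs with h1 h2
    · exact ⟨Or.inl ⟨_, rfl⟩, by rw [stepE_src, h1]⟩
    · exact ⟨Or.inr rfl, h1.symm⟩
    · exact ⟨Or.inl ⟨_, rfl⟩, stepE_src ..⟩

theorem tauStrat_next (w₁ w₂ : List C) (x : ℕ → C) :
    (tauStrat w₁ w₂ x).next = tauNext w₁ w₂ x := rfl

theorem tauStrat_winning {W : Set (ℕ → C)} (w₁ w₂ : List C) (x : ℕ → C)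
    (hn₂ : 0 < w₂.length) (hx2 : wcat (w₁ ++ w₂) x ∈ W) :
    (tauStrat w₁ w₂ x).WinningFrom W 0 := by
  intro π hplay hcons
  have hkey : ∀ n, π n = playX w₁ w₂ x (w₁.length + w₂.length) n := by
    intro n
    induction n using Nat.strong_induction_on with
    | _ n IH =>
    have hend : (gadget w₁ w₂ x).endFrom 0 (List.ofFn fun i : Fin n => π ↑i)
        = (playX w₁ w₂ x (w₁.length + w₂.length) n).1 := by
      cases n with
      | zero =>
        rw [List.ofFn_zero, playX_src, if_pos (show 0 < w₁.length + w₂.length by omega)]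
        rfl
      | succ i =>
        rw [List.ofFn_succ']
        simp only [Fin.coe_castSucc, Fin.val_last, List.concat_eq_append]
        rw [endFrom_concat, IH i (by omega)]
        exact playX_tgt (Or.inr rfl) hn₂ i
    have hτn := hcons n trivial
    rw [hτn, tauStrat_next]
    unfold tauNext
    rw [hend, List.length_ofFn]
    by_cases hv1 : n = w₁.length
    · subst hv1
      rw [playX_src, if_pos (show w₁.length < w₁.length + w₂.length by omega),
        if_pos rfl, if_pos rfl]
      unfold playX
      rw [if_pos (show w₁.length < w₁.length + w₂.length by omega)]
    · by_cases hv2 : n = w₁.length + w₂.length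
      · rw [playX_src, if_neg (show ¬(n < w₁.length + w₂.length) by omega), if_pos hv2,
          if_pos rfl, if_neg hv1]
        unfold playX
        rw [if_neg (show ¬(n < w₁.length + w₂.length) by omega), if_pos hv2]
      · rw [playX_src]
        by_cases h1 : n < w₁.length + w₂.length
        · rw [if_pos h1]
          unfold playX
          rw [if_pos h1, if_neg hv1]
        · rw [if_neg h1, if_neg hv2]
          unfold playX
          rw [if_neg h1, if_neg hv2,
            if_neg (show ¬(w₁.length + w₂.length + (n - (w₁.length + w₂.length) - 1)
              = w₁.length) by omega)]
  have hcol : Arena.playCol π = wcat (w₁ ++ w₂) x := by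
    funext n
    show (π n).2.1 = _
    rw [hkey n, playX_col (le_refl _)]
    by_cases h1 : n < w₁.length + w₂.length
    · rw [if_pos h1]
    · rw [if_neg h1, wcat_ge (show (w₁ ++ w₂).length ≤ n by simp; omega)]
      congr 1
      simp
  rw [hcol]
  exact hx2

end AuxTau

/-- for any objective `W`, if the memory structure `N` suffices to play
optimally for `W` in all finitely branching one-player arenas of Player 1, then `W`
is `N`-progress-consistent. -/
theorem progressConsistency_necessary_general {C : Type} [Nonempty C]
    (W : Set (ℕ → C)) (N : MemStruct C)
    (hsuff : SufficesIn N W (fun A => A.FinBranching ∧ A.OneP1)) :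
    ProgressConsistent N W := by
  intro m w₁ w₂ hm1 hm2 hlt
  have hw₂ : w₂ ≠ [] := by
    rintro rfl
    rw [List.append_nil] at hlt
    exact hlt.2 hlt.1
  have hn₂ : 0 < w₂.length := List.length_pos_iff.mpr hw₂
  have hns : ¬ contAfter W (w₁ ++ w₂) ⊆ contAfter W w₁ := hlt.2
  obtain ⟨x, hx2, hx1⟩ := Set.not_subset.mp hns
  obtain ⟨σ, hbased, hopt⟩ :=
    hsuff (gadget w₁ w₂ x) ⟨gadget_finBranching w₁ w₂ x, fun _ => trivial⟩
  obtain ⟨nxt, hnxt⟩ := hbased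
  have hP : ∀ u : (gadget w₁ w₂ x).V, (gadget w₁ w₂ x).P1 u := fun _ => trivial
  have hwin : σ.WinningFrom W 0 :=
    hopt 0 ⟨tauStrat w₁ w₂ x, tauStrat_winning w₁ w₂ x hn₂ hx2⟩
  have hW : Arena.playCol (mkPlay σ 0) ∈ W :=
    hwin (mkPlay σ 0) (mkPlay_playFrom σ 0 hP) (mkPlay_consistent σ 0)
  by_cases hgood : nxt w₁.length m = stepE w₁ w₂ x w₁.length
  · -- the strategy loops forever: the play is w₁ (w₂)^ω
    have hkey : ∀ n, mkPlay σ 0 n = playA w₁ w₂ x n := by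
      intro n
      induction n using Nat.strong_induction_on with
      | _ n IH =>
      have hend : (gadget w₁ w₂ x).endFrom 0 (mkHist σ 0 n)
          = trajA w₁.length w₂.length n := by
        cases n with
        | zero => rw [trajA_zero]; rfl
        | succ i =>
          rw [endFrom_mkHist, IH i (by omega)]
          exact playA_tgt x hn₂ i
      by_cases hv : trajA w₁.length w₂.length n = w₁.length
      · obtain ⟨k, hk⟩ := trajA_visit hn₂ hv
        have hcols : (mkHist σ 0 n).map (fun e => e.2.1)
            = List.ofFn fun i : Fin n => wcat w₁ (wpow w₂) ↑i := by
          rw [← ofFn_mkPlay σ 0 n, List.map_ofFn]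
          exact congrArg List.ofFn (funext fun i => by
            simp only [Function.comp_apply]
            rw [IH i i.isLt, playA_col x hn₂])
        have hmm : N.updStar N.init ((mkHist σ 0 n).map (fun e => e.2.1)) = m := by
          rw [hcols, hk]
          exact updStar_pow N m w₁ w₂ hw₂ hm1 hm2 k
        show σ.next 0 (mkHist σ 0 n) = playA w₁ w₂ x n
        rw [hnxt 0 (mkHist σ 0 n) (mkHist_valid σ 0 hP n) (hP _), hmm, hend, hv, hgood]
        unfold playA
        rw [hv]
      · have hforced := gadget_forced (mkPlay_mem σ 0 hP n)
          (by rw [mkPlay_src σ 0 hP n, hend]; exact hv)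
        rw [hforced, mkPlay_src σ 0 hP n, hend]
        rfl
    have hcol : Arena.playCol (mkPlay σ 0) = wcat w₁ (wpow w₂) := by
      funext n
      show (mkPlay σ 0 n).2.1 = _
      rw [hkey n, playA_col x hn₂]
    rw [hcol] at hW
    exact hW
  · -- the strategy exits right away: the play is w₁ x, contradiction
    exfalso
    have hkey : ∀ n, mkPlay σ 0 n = playX w₁ w₂ x w₁.length n := by
      intro n
      induction n using Nat.strong_induction_on with
      | _ n IH =>
      have hend : (gadget w₁ w₂ x).endFrom 0 (mkHist σ 0 n)
          = (playX w₁ w₂ x w₁.length n).1 := by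
        cases n with
        | zero =>
          rw [playX_src]
          show (0 : ℕ) = _
          split_ifs <;> omega
        | succ i =>
          rw [endFrom_mkHist, IH i (by omega)]
          exact playX_tgt (Or.inl rfl) hn₂ i
      by_cases hv : n = w₁.length
      · subst hv
        have hcols : (mkHist σ 0 w₁.length).map (fun e => e.2.1) = w₁ := by
          rw [← ofFn_mkPlay σ 0 w₁.length, List.map_ofFn]
          refine (congrArg List.ofFn (funext fun i => ?_)).trans (ofFn_wcat_append w₁ w₂ x)
          simp only [Function.comp_apply]
          rw [IH i i.isLt, playX_col (show w₁.length ≤ w₁.length + w₂.length by omega),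
            if_pos i.isLt]
        have hEn := mkPlay_mem σ 0 hP w₁.length
        have hsrcn : (mkPlay σ 0 w₁.length).1 = w₁.length := by
          rw [mkPlay_src σ 0 hP, hend, playX_src, if_neg (lt_irrefl _), if_pos rfl]
        have hchoice : mkPlay σ 0 w₁.length = nxt w₁.length m := by
          show σ.next 0 (mkHist σ 0 w₁.length) = _
          rw [hnxt 0 _ (mkHist_valid σ 0 hP w₁.length) (hP _), hcols, hm1, hend, playX_src,
            if_neg (lt_irrefl _), if_pos rfl]
        rcases gadget_E_cases hEn with h | h
        · rw [hsrcn, hchoice] at h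
          exact absurd h hgood
        · rw [h]
          show exitE w₁ w₂ x = playX w₁ w₂ x w₁.length w₁.length
          unfold playX
          rw [if_neg (lt_irrefl _), if_pos rfl]
      · have hsrcne : (mkPlay σ 0 n).1 ≠ w₁.length := by
          rw [mkPlay_src σ 0 hP, hend, playX_src]
          by_cases h1 : n < w₁.length
          · rw [if_pos h1]
            show ¬(n = w₁.length)
            omega
          · rw [if_neg h1, if_neg hv]
            show ¬(w₁.length + w₂.length + (n - w₁.length - 1) = w₁.length)
            omega
        have hforced := gadget_forced (mkPlay_mem σ 0 hP n) hsrcne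
        rw [hforced, mkPlay_src σ 0 hP n, hend, playX_src]
        by_cases h1 : n < w₁.length
        · rw [if_pos h1]
          unfold playX
          rw [if_pos h1]
        · rw [if_neg h1, if_neg hv]
          unfold playX
          rw [if_neg h1, if_neg hv]
    have hcol : Arena.playCol (mkPlay σ 0) = wcat w₁ x := by
      funext n
      show (mkPlay σ 0 n).2.1 = _
      rw [hkey n, playX_col (show w₁.length ≤ w₁.length + w₂.length by omega)]
      by_cases h1 : n < w₁.length
      · rw [if_pos h1, wcat_lt h1, wcat_lt (show n < (w₁ ++ w₂).length by simp; omega)]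
        simp only [List.get_eq_getElem]
        exact List.getElem_append_left h1
      · rw [if_neg h1, wcat_ge (show w₁.length ≤ n by omega)]
    rw [hcol] at hW
    exact hx1 hW

end RegularMemory
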